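/- For all vectors α, β ∈ ℂ²⊗ℂ² ≅ ℂ⁴: if ⟨χ_{ij}, α ⊗ β⟩ = 0 for every ordered pair (i,j) with i, j ∈ {1,2,3,4}, i ≠ j and (i,j) ≠ (1,2), then α ⊗ β = 0 (i.e., α = 0 or β = 0). In other words, the 11-element proper subset T := S^{↑↓}_{(2)} \ {χ_{12}} admits no nonzero product vector in its orthogonal complement, so T is itself an unextendible product basis; hence S^{↑↓}_{(2)} is not a genuinely unextendible product basis and, by Duan et al.'s criterion, is not conclusively distinguishable via LOCC. (Key step of Theorem 2.) -/

import Mathlib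

/-!
Statement 11: Even the 11-element subset T = S^{↑↓}_{(2)} \ {χ_{12}} admits no nonzero
product vector in its orthogonal complement, so T is itself a UPB; hence S^{↑↓}_{(2)} is
not a genuinely unextendible product basis and is not conclusively distinguishable
via LOCC.
-/

noncomputable section
open scoped ComplexInnerProductSpace

/-- The qubit Hilbert space `ℂ²`. -/
abbrev Qubit : Type := EuclideanSpace ℂ (Fin 2)

/-- The (Kronecker) tensor product of two vectors, realized in `EuclideanSpace ℂ (ι × κ)`. -/
def tp {ι κ : Type} (x : EuclideanSpace ℂ ι) (y : EuclideanSpace ℂ κ) :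
    EuclideanSpace ℂ (ι × κ) :=
  (WithLp.equiv 2 (ι × κ → ℂ)).symm (fun p => x p.1 * y p.2)

/-- A qubit vector from its two coordinates. -/
def mk2 (a b : ℂ) : Qubit := (WithLp.equiv 2 (Fin 2 → ℂ)).symm ![a, b]

/-- The cube root of unity phases `ζ k = exp(2πik/3)`. -/
def ζ (k : ℤ) : ℂ := Complex.exp (2 * (Real.pi : ℂ) * Complex.I * (k : ℂ) / 3)

/-- `1/√3` in `ℂ`. -/
def r3 : ℂ := ((Real.sqrt 3 : ℂ))⁻¹

/-- `√2` in `ℂ`. -/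
def r2 : ℂ := (Real.sqrt 2 : ℂ)

/-- The qubit SIC states: `s 0 = |0⟩` and
`s j = (1/√3)(|0⟩ + √2 e^{2πi(j-1)/3} |1⟩)` for `j = 1, 2, 3`
(indexing the paper's `s_1, …, s_4` by `Fin 4`). -/
def s : Fin 4 → Qubit :=
  ![mk2 1 0,
    mk2 r3 (r3 * r2 * ζ 0),
    mk2 r3 (r3 * r2 * ζ 1),
    mk2 r3 (r3 * r2 * ζ 2)]

/-- The orthogonal SIC states: `sperp 0 = |1⟩` and
`sperp j = (1/√3)(√2 e^{-2πi(j-1)/3} |0⟩ - |1⟩)` for `j = 1, 2, 3`. -/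
def sperp : Fin 4 → Qubit :=
  ![mk2 0 1,
    mk2 (r3 * r2 * ζ 0) (-r3),
    mk2 (r3 * r2 * ζ (-1)) (-r3),
    mk2 (r3 * r2 * ζ (-2)) (-r3)]

/-- The 2-CLSM vectors `χ_{ij} = (s_i ⊗ s_j) ⊗ (s_i^⊥ ⊗ s_j^⊥)`, the first `ℂ⁴` factor
being Alice's system and the second Bob's. -/
def χ (i j : Fin 4) : EuclideanSpace ℂ ((Fin 2 × Fin 2) × (Fin 2 × Fin 2)) :=
  tp (tp (s i) (s j)) (tp (sperp i) (sperp j))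


lemma r3_ne : r3 ≠ 0 := by
  simp [r3, Complex.ofReal_ne_zero, Real.sqrt_ne_zero']

lemma r2_ne : r2 ≠ 0 := by
  simp [r2, Complex.ofReal_ne_zero, Real.sqrt_ne_zero']

lemma ζ_ne (k : ℤ) : ζ k ≠ 0 := Complex.exp_ne_zero _

lemma ζ_inj {a b : ℤ} (h3 : ¬ (3:ℤ) ∣ (a - b)) : ζ a ≠ ζ b := by
  intro he
  rw [ζ, ζ, Complex.exp_eq_exp_iff_exists_int] at he
  obtain ⟨n, hn⟩ := he
  have key : 2*(Real.pi:ℂ)*Complex.I * a = 2*(Real.pi:ℂ)*Complex.I*(b + 3*n) := by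
    linear_combination 3 * hn
  have h2 : (a:ℂ) = (b:ℂ) + 3*(n:ℂ) :=
    mul_left_cancel₀ (mul_ne_zero (mul_ne_zero two_ne_zero
      (Complex.ofReal_ne_zero.2 Real.pi_ne_zero)) Complex.I_ne_zero) key
  have : a = b + 3*n := by exact_mod_cast h2
  exact h3 ⟨n, by omega⟩

lemma conj_r3 : (starRingEnd ℂ) r3 = r3 := by
  simp [r3, map_inv₀, Complex.conj_ofReal]

lemma conj_r2 : (starRingEnd ℂ) r2 = r2 := by
  simp [r2, Complex.conj_ofReal]

lemma ζ_conj (k : ℤ) : (starRingEnd ℂ) (ζ k) = ζ (-k) := by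
  rw [ζ, ζ, ← Complex.exp_conj]
  congr 1
  simp [map_div₀, Complex.conj_ofReal, Complex.conj_I, map_ofNat, map_intCast]

/-- Conjugated SIC coordinate table (`cs i p = conj (s i p)`). -/
def cs : Fin 4 → Fin 2 → ℂ :=
  ![![1, 0], ![r3, r3*r2*ζ 0], ![r3, r3*r2*ζ (-1)], ![r3, r3*r2*ζ (-2)]]

/-- Conjugated perp coordinate table (`cp i p = conj (sperp i p)`). -/
def cp : Fin 4 → Fin 2 → ℂ :=
  ![![0, 1], ![r3*r2*ζ 0, -r3], ![r3*r2*ζ 1, -r3], ![r3*r2*ζ 2, -r3]]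

/-- The bilinear form associated to a vector `γ : ℂ² ⊗ ℂ²`. -/
def Bil (γ : EuclideanSpace ℂ (Fin 2 × Fin 2)) (x y : Fin 2 → ℂ) : ℂ :=
  x 0 * y 0 * γ (0,0) + x 0 * y 1 * γ (0,1) + x 1 * y 0 * γ (1,0) + x 1 * y 1 * γ (1,1)

lemma rowZero (γ : EuclideanSpace ℂ (Fin 2 × Fin 2)) (u x y : Fin 2 → ℂ)
    (hdet : x 0 * y 1 - x 1 * y 0 ≠ 0)
    (hx : Bil γ u x = 0) (hy : Bil γ u y = 0) : ∀ z, Bil γ u z = 0 := by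
  intro z
  have hid : (x 0 * y 1 - x 1 * y 0) * Bil γ u z
      = (z 0 * y 1 - z 1 * y 0) * Bil γ u x + (x 0 * z 1 - x 1 * z 0) * Bil γ u y := by
    simp only [Bil]; ring
  have h0 : (x 0 * y 1 - x 1 * y 0) * Bil γ u z = 0 := by rw [hid, hx, hy]; ring
  exact (mul_eq_zero.mp h0).resolve_left hdet

lemma matZero (γ : EuclideanSpace ℂ (Fin 2 × Fin 2)) (x y : Fin 2 → ℂ)
    (hdet : x 0 * y 1 - x 1 * y 0 ≠ 0)
    (hx : ∀ z, Bil γ x z = 0) (hy : ∀ z, Bil γ y z = 0) :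
    ∀ pq : Fin 2 × Fin 2, γ pq = 0 := by
  have hall : ∀ u z, Bil γ u z = 0 := by
    intro u z
    have hid : (x 0 * y 1 - x 1 * y 0) * Bil γ u z
        = (u 0 * y 1 - u 1 * y 0) * Bil γ x z + (x 0 * u 1 - x 1 * u 0) * Bil γ y z := by
      simp only [Bil]; ring
    have h0 : (x 0 * y 1 - x 1 * y 0) * Bil γ u z = 0 := by rw [hid, hx, hy]; ring
    exact (mul_eq_zero.mp h0).resolve_left hdet
  rintro ⟨p, q⟩
  fin_cases p <;> fin_cases q
  · simpa [Bil] using hall ![1,0] ![1,0]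
  · simpa [Bil] using hall ![1,0] ![0,1]
  · simpa [Bil] using hall ![0,1] ![1,0]
  · simpa [Bil] using hall ![0,1] ![0,1]

lemma pick2 (γ δ : EuclideanSpace ℂ (Fin 2 × Fin 2)) (u v x1 x2 x3 y1 y2 y3 : Fin 2 → ℂ)
    (d12 : x1 0 * x2 1 - x1 1 * x2 0 ≠ 0)
    (d13 : x1 0 * x3 1 - x1 1 * x3 0 ≠ 0)
    (d23 : x2 0 * x3 1 - x2 1 * x3 0 ≠ 0)
    (e12 : y1 0 * y2 1 - y1 1 * y2 0 ≠ 0)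
    (e13 : y1 0 * y3 1 - y1 1 * y3 0 ≠ 0)
    (e23 : y2 0 * y3 1 - y2 1 * y3 0 ≠ 0)
    (h1 : Bil γ u x1 = 0 ∨ Bil δ v y1 = 0)
    (h2 : Bil γ u x2 = 0 ∨ Bil δ v y2 = 0)
    (h3 : Bil γ u x3 = 0 ∨ Bil δ v y3 = 0) :
    (∀ z, Bil γ u z = 0) ∨ (∀ z, Bil δ v z = 0) := by
  rcases h1 with h1|h1 <;> rcases h2 with h2|h2 <;> rcases h3 with h3|h3 <;>
  first
    | exact Or.inl (rowZero _ _ _ _ d12 h1 h2)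
    | exact Or.inl (rowZero _ _ _ _ d13 h1 h3)
    | exact Or.inl (rowZero _ _ _ _ d23 h2 h3)
    | exact Or.inr (rowZero _ _ _ _ e12 h1 h2)
    | exact Or.inr (rowZero _ _ _ _ e13 h1 h3)
    | exact Or.inr (rowZero _ _ _ _ e23 h2 h3)

lemma aux_diff {a b : ℤ} (h : ¬ (3:ℤ) ∣ (a - b)) {x : ℂ}
    (hx : x = r3*r3*r2*(ζ a - ζ b)) : x ≠ 0 := by
  rw [hx]
  exact mul_ne_zero (mul_ne_zero (mul_ne_zero r3_ne r3_ne) r2_ne)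
    (sub_ne_zero.mpr (ζ_inj h))

lemma hindA : ∀ i j : Fin 4, i ≠ j → cs i 0 * cs j 1 - cs i 1 * cs j 0 ≠ 0 := by
  intro i j hij
  fin_cases i <;> fin_cases j <;>
  first
    | exact absurd rfl hij
    | (simp_all [cs, Matrix.vecHead, Matrix.vecTail, mul_eq_zero, sub_eq_zero, r3_ne, r2_ne, ζ_ne]; done)
    | (refine aux_diff (a := 0) (b := -1) (by decide) ?_; simp [cs, Matrix.vecHead, Matrix.vecTail]; ring1)
    | (refine aux_diff (a := -1) (b := 0) (by decide) ?_; simp [cs, Matrix.vecHead, Matrix.vecTail]; ring1)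
    | (refine aux_diff (a := 0) (b := -2) (by decide) ?_; simp [cs, Matrix.vecHead, Matrix.vecTail]; ring1)
    | (refine aux_diff (a := -2) (b := 0) (by decide) ?_; simp [cs, Matrix.vecHead, Matrix.vecTail]; ring1)
    | (refine aux_diff (a := -1) (b := -2) (by decide) ?_; simp [cs, Matrix.vecHead, Matrix.vecTail]; ring1)
    | (refine aux_diff (a := -2) (b := -1) (by decide) ?_; simp [cs, Matrix.vecHead, Matrix.vecTail]; ring1)

lemma hindB : ∀ i j : Fin 4, i ≠ j → cp i 0 * cp j 1 - cp i 1 * cp j 0 ≠ 0 := by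
  intro i j hij
  fin_cases i <;> fin_cases j <;>
  first
    | exact absurd rfl hij
    | (simp_all [cp, Matrix.vecHead, Matrix.vecTail, mul_eq_zero, sub_eq_zero, r3_ne, r2_ne, ζ_ne]; done)
    | (refine aux_diff (a := 1) (b := 2) (by decide) ?_; simp [cp, Matrix.vecHead, Matrix.vecTail]; ring1)
    | (refine aux_diff (a := 2) (b := 1) (by decide) ?_; simp [cp, Matrix.vecHead, Matrix.vecTail]; ring1)
    | (refine aux_diff (a := 0) (b := 1) (by decide) ?_; simp [cp, Matrix.vecHead, Matrix.vecTail]; ring1)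
    | (refine aux_diff (a := 1) (b := 0) (by decide) ?_; simp [cp, Matrix.vecHead, Matrix.vecTail]; ring1)
    | (refine aux_diff (a := 0) (b := 2) (by decide) ?_; simp [cp, Matrix.vecHead, Matrix.vecTail]; ring1)
    | (refine aux_diff (a := 2) (b := 0) (by decide) ?_; simp [cp, Matrix.vecHead, Matrix.vecTail]; ring1)

lemma mk2_zero (a b : ℂ) : mk2 a b 0 = a := rfl
lemma mk2_one (a b : ℂ) : mk2 a b 1 = b := rfl

lemma cs_eq (i : Fin 4) (p : Fin 2) : (starRingEnd ℂ) (s i p) = cs i p := by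
  fin_cases i <;> fin_cases p <;>
    simp [s, cs, mk2_zero, mk2_one, Matrix.vecHead, Matrix.vecTail,
      map_mul, conj_r2, conj_r3, ζ_conj]

lemma cp_eq (i : Fin 4) (p : Fin 2) : (starRingEnd ℂ) (sperp i p) = cp i p := by
  fin_cases i <;> fin_cases p <;>
    simp [sperp, cp, mk2_zero, mk2_one, Matrix.vecHead, Matrix.vecTail,
      map_mul, conj_r2, conj_r3, ζ_conj]

lemma tp_apply {ι κ : Type} (x : EuclideanSpace ℂ ι) (y : EuclideanSpace ℂ κ)
    (p : ι × κ) : tp x y p = x p.1 * y p.2 := rfl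

lemma key (α β : EuclideanSpace ℂ (Fin 2 × Fin 2)) (i j : Fin 4) :
    ⟪χ i j, tp α β⟫ = Bil α (cs i) (cs j) * Bil β (cp i) (cp j) := by
  have : ∀ p : (Fin 2 × Fin 2) × (Fin 2 × Fin 2),
      (starRingEnd ℂ) (χ i j p) * (tp α β) p
      = cs i p.1.1 * cs j p.1.2 * cp i p.2.1 * cp j p.2.2 * (α p.1 * β p.2) := by
    intro p
    simp only [χ, tp_apply, map_mul, cs_eq, cp_eq]
    ring
  calc ⟪χ i j, tp α β⟫
      = ∑ p : (Fin 2 × Fin 2) × (Fin 2 × Fin 2),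
          (starRingEnd ℂ) (χ i j p) * (tp α β) p := by
        simp [PiLp.inner_apply, RCLike.inner_apply]
        exact Finset.sum_congr rfl fun p _ => mul_comm _ _
    _ = ∑ p : (Fin 2 × Fin 2) × (Fin 2 × Fin 2),
          cs i p.1.1 * cs j p.1.2 * cp i p.2.1 * cp j p.2.2 * (α p.1 * β p.2) := by
        exact Finset.sum_congr rfl fun p _ => this p
    _ = Bil α (cs i) (cs j) * Bil β (cp i) (cp j) := by
        rw [Fintype.sum_prod_type]
        simp only [Fintype.sum_prod_type, Fin.sum_univ_two, Bil]
        ring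

/-- If a product vector `α ⊗ β` (with `α, β ∈ ℂ²⊗ℂ² ≅ ℂ⁴`) is orthogonal to every
`χ_{ij}` with `i ≠ j` and `(i, j) ≠ (1, 2)` (here `(0, 1)` in `Fin 4` indexing), then
`α ⊗ β = 0`; i.e. the proper subset `T = S^{↑↓}_{(2)} \ {χ_{12}}` is itself a UPB. -/
theorem antiparallel_double_SIC_2CLSM_subset_UPB
    (α β : EuclideanSpace ℂ (Fin 2 × Fin 2))
    (h : ∀ i j : Fin 4, i ≠ j → (i, j) ≠ ((0 : Fin 4), (1 : Fin 4)) → ⟪χ i j, tp α β⟫ = 0) :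
    tp α β = 0 := by
  have h' : ∀ i j : Fin 4, i ≠ j → (i, j) ≠ ((0 : Fin 4), (1 : Fin 4)) →
      Bil α (cs i) (cs j) = 0 ∨ Bil β (cp i) (cp j) = 0 := by
    intro i j h1 h2
    exact mul_eq_zero.mp (by rw [← key α β i j]; exact h i j h1 h2)
  have P1 : (∀ z, Bil α (cs 1) z = 0) ∨ (∀ z, Bil β (cp 1) z = 0) :=
    pick2 α β (cs 1) (cp 1) (cs 0) (cs 2) (cs 3) (cp 0) (cp 2) (cp 3)
      (hindA 0 2 (by decide)) (hindA 0 3 (by decide)) (hindA 2 3 (by decide))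
      (hindB 0 2 (by decide)) (hindB 0 3 (by decide)) (hindB 2 3 (by decide))
      (h' 1 0 (by decide) (by decide)) (h' 1 2 (by decide) (by decide))
      (h' 1 3 (by decide) (by decide))
  have P2 : (∀ z, Bil α (cs 2) z = 0) ∨ (∀ z, Bil β (cp 2) z = 0) :=
    pick2 α β (cs 2) (cp 2) (cs 0) (cs 1) (cs 3) (cp 0) (cp 1) (cp 3)
      (hindA 0 1 (by decide)) (hindA 0 3 (by decide)) (hindA 1 3 (by decide))
      (hindB 0 1 (by decide)) (hindB 0 3 (by decide)) (hindB 1 3 (by decide))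
      (h' 2 0 (by decide) (by decide)) (h' 2 1 (by decide) (by decide))
      (h' 2 3 (by decide) (by decide))
  have P3 : (∀ z, Bil α (cs 3) z = 0) ∨ (∀ z, Bil β (cp 3) z = 0) :=
    pick2 α β (cs 3) (cp 3) (cs 0) (cs 1) (cs 2) (cp 0) (cp 1) (cp 2)
      (hindA 0 1 (by decide)) (hindA 0 2 (by decide)) (hindA 1 2 (by decide))
      (hindB 0 1 (by decide)) (hindB 0 2 (by decide)) (hindB 1 2 (by decide))
      (h' 3 0 (by decide) (by decide)) (h' 3 1 (by decide) (by decide))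
      (h' 3 2 (by decide) (by decide))
  have hz : (∀ pq : Fin 2 × Fin 2, α pq = 0) ∨ (∀ pq : Fin 2 × Fin 2, β pq = 0) := by
    rcases P1 with p1|p1 <;> rcases P2 with p2|p2 <;> rcases P3 with p3|p3
    · exact Or.inl (matZero α (cs 1) (cs 2) (hindA 1 2 (by decide)) p1 p2)
    · exact Or.inl (matZero α (cs 1) (cs 2) (hindA 1 2 (by decide)) p1 p2)
    · exact Or.inl (matZero α (cs 1) (cs 3) (hindA 1 3 (by decide)) p1 p3)
    · exact Or.inr (matZero β (cp 2) (cp 3) (hindB 2 3 (by decide)) p2 p3)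
    · exact Or.inl (matZero α (cs 2) (cs 3) (hindA 2 3 (by decide)) p2 p3)
    · exact Or.inr (matZero β (cp 1) (cp 3) (hindB 1 3 (by decide)) p1 p3)
    · exact Or.inr (matZero β (cp 1) (cp 2) (hindB 1 2 (by decide)) p1 p2)
    · exact Or.inr (matZero β (cp 1) (cp 2) (hindB 1 2 (by decide)) p1 p2)
  ext p
  rcases hz with hz|hz
  · show α p.1 * β p.2 = 0
    rw [hz p.1, zero_mul]
  · show α p.1 * β p.2 = 0
    rw [hz p.2, mul_zero]
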